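/- Let A, B : ℝ → ℝ be differentiable functions with B(v) > 0, B'(v) > 0, A(v) > 0, A'(v) > 0 at some point v* > 0. If (A/B)'(v*) = 0 and (A/B)''(v*) ≤ 0, then (A'/B')'(v*) ≤ 0; moreover if (A/B)''(v*) < 0 then (A'/B')'(v*) < 0. -/

import Mathlib

theorem stmt_13 (A B : ℝ → ℝ) (hA : ContDiff ℝ 3 A) (hB : ContDiff ℝ 3 B)
    (v : ℝ) (hv : 0 < v)
    (hBv : 0 < B v) (hB'v : 0 < deriv B v) (hAv : 0 < A v) (hA'v : 0 < deriv A v)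
    (hfirst : deriv (fun x => A x / B x) v = 0) :
    (deriv (deriv (fun x => A x / B x)) v ≤ 0 →
      deriv (fun x => deriv A x / deriv B x) v ≤ 0) ∧
    (deriv (deriv (fun x => A x / B x)) v < 0 →
      deriv (fun x => deriv A x / deriv B x) v < 0) := by
  have hA1 : Differentiable ℝ A := hA.differentiable (by norm_num)
  have hB1 : Differentiable ℝ B := hB.differentiable (by norm_num)
  have hA2 : ContDiff ℝ 2 (deriv A) := by
    have h : ContDiff ℝ ((2 : ℕ) + 1) A := by exact_mod_cast hA
    exact (contDiff_succ_iff_deriv.mp h).2.2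
  have hB2 : ContDiff ℝ 2 (deriv B) := by
    have h : ContDiff ℝ ((2 : ℕ) + 1) B := by exact_mod_cast hB
    exact (contDiff_succ_iff_deriv.mp h).2.2
  have hA'd : Differentiable ℝ (deriv A) := hA2.differentiable (by norm_num)
  have hB'd : Differentiable ℝ (deriv B) := hB2.differentiable (by norm_num)
  have hBne : ∀ᶠ x in nhds v, B x ≠ 0 :=
    hB1.continuous.continuousAt.eventually_ne hBv.ne'
  have h1 : deriv (fun x => A x / B x) =ᶠ[nhds v]
      fun x => (deriv A x * B x - A x * deriv B x) / (B x) ^ 2 := by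
    filter_upwards [hBne] with x hx
    exact deriv_div (hA1 x) (hB1 x) hx
  have hnum : deriv A v * B v - A v * deriv B v = 0 := by
    have hd : deriv (fun x => A x / B x) v
        = (deriv A v * B v - A v * deriv B v) / (B v) ^ 2 :=
      deriv_div (hA1 v) (hB1 v) hBv.ne'
    rw [hd] at hfirst
    have := (div_eq_zero_iff.mp hfirst).resolve_right
      (pow_ne_zero 2 hBv.ne')
    exact this
  have hNd : DifferentiableAt ℝ (fun x => deriv A x * B x - A x * deriv B x) v :=
    ((hA'd v).mul (hB1 v)).sub ((hA1 v).mul (hB'd v))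
  have hDd : DifferentiableAt ℝ (fun x => (B x) ^ 2) v := (hB1 v).pow 2
  have hN : deriv (fun x => deriv A x * B x - A x * deriv B x) v
      = deriv (deriv A) v * B v - A v * deriv (deriv B) v := by
    rw [deriv_fun_sub ((hA'd v).fun_mul (hB1 v)) ((hA1 v).fun_mul (hB'd v)),
      deriv_fun_mul (hA'd v) (hB1 v), deriv_fun_mul (hA1 v) (hB'd v)]
    ring
  have hDderiv : deriv (fun x => (B x) ^ 2) v = 2 * B v * deriv B v := by
    have := deriv_fun_pow (n := 2) (hB1 v)
    rw [this]; ring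
  have h2 : deriv (deriv (fun x => A x / B x)) v
      = (deriv (deriv A) v * B v - A v * deriv (deriv B) v) / (B v) ^ 2 := by
    rw [h1.deriv_eq, deriv_fun_div hNd hDd (pow_ne_zero 2 hBv.ne'), hN, hDderiv, hnum]
    field_simp
    ring
  have hg : deriv (fun x => deriv A x / deriv B x) v
      = (deriv (deriv A) v * deriv B v - deriv A v * deriv (deriv B) v)
        / (deriv B v) ^ 2 :=
    deriv_div (hA'd v) (hB'd v) hB'v.ne'
  have hrel : deriv (fun x => deriv A x / deriv B x) v
      = deriv (deriv (fun x => A x / B x)) v * (B v / deriv B v) := by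
    rw [hg, h2]
    rw [div_mul_div_comm, div_eq_div_iff (pow_ne_zero 2 hB'v.ne')
      (by positivity)]
    linear_combination (-(B v * deriv B v * deriv (deriv B) v)) * hnum
  have hpos : 0 < B v / deriv B v := div_pos hBv hB'v
  constructor
  · intro h
    rw [hrel]
    exact mul_nonpos_of_nonpos_of_nonneg h hpos.le
  · intro h
    rw [hrel]
    exact mul_neg_of_neg_of_pos h hpos
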